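/- Let A^g be a g-inverse of A and suppose A·q = c is consistent. Then A·q = c has a nonnegative solution if and only if for every t ≥ 0 with (I − A^g A)ᵀ t = 0 one has tᵀ A^g c ≥ 0; equivalently, the minimum of tᵀ A^g c over { t ≥ 0 : (I − A^g A)ᵀ t = 0 } equals 0 (the minimum is always ≤ 0 since t = 0 is feasible). -/

import Mathlib

open Matrix

open Finset in

lemma farkas (m : ℕ) : ∀ (n : ℕ) (a : Fin n → (Fin m → ℝ)) (c : Fin m → ℝ),
    (∃ x : Fin n → ℝ, (∀ i, 0 ≤ x i) ∧ ∑ i, x i • a i = c) ∨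
    (∃ y : Fin m → ℝ, (∀ i, 0 ≤ (a i) ⬝ᵥ y) ∧ c ⬝ᵥ y < 0) := by
  intro n
  induction n with
  | zero =>
    intro a c
    by_cases hc : c = 0
    · exact Or.inl ⟨0, fun i => le_refl _, by simp [hc]⟩
    · refine Or.inr ⟨-c, fun i => i.elim0, ?_⟩
      have h0 : (0:ℝ) ≤ c ⬝ᵥ c :=
        Finset.sum_nonneg (fun j _ => mul_self_nonneg (c j))
      have h1 : c ⬝ᵥ c ≠ 0 := fun h => hc ((dotProduct_self_eq_zero).mp h)
      have h2 : (0:ℝ) < c ⬝ᵥ c := lt_of_le_of_ne h0 (Ne.symm h1)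
      have h3 : c ⬝ᵥ (-c) = -(c ⬝ᵥ c) := dotProduct_neg c c
      linarith
  | succ n ih =>
    intro a c
    set a' : Fin n → (Fin m → ℝ) := fun i => a i.castSucc with ha'
    set d : Fin m → ℝ := a (Fin.last n) with hd'
    rcases ih a' c with ⟨x, hx, hsum⟩ | ⟨y, hy, hcy⟩
    · refine Or.inl ⟨Fin.snoc x 0, ?_, ?_⟩
      · intro i
        refine Fin.lastCases ?_ ?_ i <;> simp [Fin.snoc_last, Fin.snoc_castSucc]
        exact hx
      · rw [Fin.sum_univ_castSucc]
        simp [Fin.snoc_castSucc, Fin.snoc_last, hsum]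
        exact hsum
    · by_cases hd : 0 ≤ d ⬝ᵥ y
      · refine Or.inr ⟨y, ?_, hcy⟩
        intro i
        refine Fin.lastCases ?_ ?_ i
        · exact hd
        · exact hy
      · push_neg at hd
        have hδ : (d ⬝ᵥ y) ≠ 0 := ne_of_lt hd
        rcases ih (fun i => a' i - (((a' i) ⬝ᵥ y) / (d ⬝ᵥ y)) • d)
            (c - ((c ⬝ᵥ y) / (d ⬝ᵥ y)) • d) with ⟨x, hx, hsum⟩ | ⟨y', hy', hcy'⟩
        · have hμ0 : 0 ≤ (c ⬝ᵥ y) / (d ⬝ᵥ y)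
              - ∑ i, x i * (((a' i) ⬝ᵥ y) / (d ⬝ᵥ y)) := by
            have h1 : 0 < (c ⬝ᵥ y) / (d ⬝ᵥ y) := div_pos_of_neg_of_neg hcy hd
            have h2 : ∑ i, x i * (((a' i) ⬝ᵥ y) / (d ⬝ᵥ y)) ≤ 0 := by
              apply Finset.sum_nonpos
              intro i _
              exact mul_nonpos_of_nonneg_of_nonpos (hx i)
                (div_nonpos_of_nonneg_of_nonpos (hy i) (le_of_lt hd))
            linarith
          refine Or.inl ⟨Fin.snoc x ((c ⬝ᵥ y) / (d ⬝ᵥ y)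
              - ∑ i, x i * (((a' i) ⬝ᵥ y) / (d ⬝ᵥ y))), ?_, ?_⟩
          · intro i
            refine Fin.lastCases ?_ ?_ i <;> simp only [Fin.snoc_last, Fin.snoc_castSucc]
            · exact hμ0
            · exact hx
          · rw [Fin.sum_univ_castSucc]
            simp only [Fin.snoc_castSucc, Fin.snoc_last]
            funext j
            have hs := congrFun hsum j
            simp only [Finset.sum_apply, Pi.smul_apply, Pi.sub_apply,
              smul_eq_mul, Pi.add_apply] at hs ⊢
            rw [Finset.sum_congr rfl (fun i _ => by ring :
              ∀ i ∈ Finset.univ, x i * (a' i j - ((a' i) ⬝ᵥ y) / (d ⬝ᵥ y) * d j)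
                = x i * a' i j - x i * (((a' i) ⬝ᵥ y) / (d ⬝ᵥ y)) * d j),
              Finset.sum_sub_distrib, ← Finset.sum_mul] at hs
            rw [show (∑ i, x i * a (Fin.castSucc i) j) = ∑ i, x i * a' i j from rfl]
            linear_combination hs
        · refine Or.inr ⟨y' - ((d ⬝ᵥ y') / (d ⬝ᵥ y)) • y, ?_, ?_⟩
          · intro i
            refine Fin.lastCases ?_ ?_ i
            · rw [dotProduct_sub, dotProduct_smul,
                show a (Fin.last n) = d from rfl, smul_eq_mul,
                div_mul_cancel₀ _ hδ, sub_self]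
            · intro i
              have h := hy' i
              simp only [sub_dotProduct, smul_dotProduct, smul_eq_mul] at h
              rw [dotProduct_sub, dotProduct_smul,
                show a (Fin.castSucc i) = a' i from rfl, smul_eq_mul]
              have heq : (a' i) ⬝ᵥ y' - ((d ⬝ᵥ y') / (d ⬝ᵥ y)) * ((a' i) ⬝ᵥ y)
                  = (a' i) ⬝ᵥ y' - (((a' i) ⬝ᵥ y) / (d ⬝ᵥ y)) * (d ⬝ᵥ y') := by ring
              rw [heq]; exact h
          · simp only [sub_dotProduct, smul_dotProduct, smul_eq_mul] at hcy'
            rw [dotProduct_sub, dotProduct_smul, smul_eq_mul]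
            have heq : c ⬝ᵥ y' - ((d ⬝ᵥ y') / (d ⬝ᵥ y)) * (c ⬝ᵥ y)
                = c ⬝ᵥ y' - ((c ⬝ᵥ y) / (d ⬝ᵥ y)) * (d ⬝ᵥ y') := by ring
            rw [heq]; exact hcy'

/-- With `Ag` a g-inverse of `A` and `A·q = c` consistent: `A·q = c` has a
nonnegative solution iff every `t ≥ 0` with `(I − Ag·A)ᵀ t = 0` satisfies `tᵀ Ag c ≥ 0`;
equivalently, `0` is the least value of `tᵀ Ag c` over the feasible set (the minimum is
always ≤ 0 since `t = 0` is feasible, which is witnessed by `0` belonging to the set). -/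
theorem stmt7 (m n : ℕ) (A : Matrix (Fin m) (Fin n) ℝ) (Ag : Matrix (Fin n) (Fin m) ℝ)
    (c : Fin m → ℝ) (hg : A * Ag * A = A) (hcons : ∃ q : Fin n → ℝ, A *ᵥ q = c) :
    ((∃ q : Fin n → ℝ, 0 ≤ q ∧ A *ᵥ q = c) ↔
      (∀ t : Fin n → ℝ, 0 ≤ t → (1 - Ag * A)ᵀ *ᵥ t = 0 → 0 ≤ t ⬝ᵥ (Ag *ᵥ c))) ∧
    ((∃ q : Fin n → ℝ, 0 ≤ q ∧ A *ᵥ q = c) ↔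
      IsLeast {v : ℝ | ∃ t : Fin n → ℝ,
        0 ≤ t ∧ (1 - Ag * A)ᵀ *ᵥ t = 0 ∧ v = t ⬝ᵥ (Ag *ᵥ c)} 0) := by
  obtain ⟨q0, hq0⟩ := hcons
  -- A * Ag *ᵥ c = c
  have hAAg : (A * Ag) *ᵥ c = c := by
    rw [← hq0, Matrix.mulVec_mulVec, hg]
  have main : (∃ q : Fin n → ℝ, 0 ≤ q ∧ A *ᵥ q = c) ↔
      (∀ t : Fin n → ℝ, 0 ≤ t → (1 - Ag * A)ᵀ *ᵥ t = 0 → 0 ≤ t ⬝ᵥ (Ag *ᵥ c)) := by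
    constructor
    · rintro ⟨q, hq, hAq⟩ t ht hker
      -- (Ag*A)ᵀ *ᵥ t = t
      have hfix : (Ag * A)ᵀ *ᵥ t = t := by
        have := hker
        rw [Matrix.transpose_sub, Matrix.transpose_one, Matrix.sub_mulVec,
          Matrix.one_mulVec, sub_eq_zero] at this
        exact this.symm
      have : t ⬝ᵥ (Ag *ᵥ c) = t ⬝ᵥ q := by
        calc t ⬝ᵥ (Ag *ᵥ c) = t ⬝ᵥ (Ag *ᵥ (A *ᵥ q)) := by rw [hAq]
          _ = t ⬝ᵥ ((Ag * A) *ᵥ q) := by rw [Matrix.mulVec_mulVec]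
          _ = ((Ag * A)ᵀ *ᵥ t) ⬝ᵥ q := by
                rw [Matrix.dotProduct_mulVec, ← Matrix.mulVec_transpose]
          _ = t ⬝ᵥ q := by rw [hfix]
      rw [this]
      exact Finset.sum_nonneg fun i _ => mul_nonneg (ht i) (hq i)
    · intro h
      rcases farkas m n (fun i => fun j => A j i) c with ⟨x, hx, hsum⟩ | ⟨y, hy, hcy⟩
      · refine ⟨x, fun i => hx i, ?_⟩
        funext j
        rw [← congrFun hsum j]
        simp [Matrix.mulVec, dotProduct, mul_comm]
      · exfalso
        set t : Fin n → ℝ := Aᵀ *ᵥ y with htdef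
        have ht : 0 ≤ t := by
          intro i
          have := hy i
          simpa [htdef, Matrix.mulVec, dotProduct] using this
        have hker : (1 - Ag * A)ᵀ *ᵥ t = 0 := by
          rw [Matrix.transpose_sub, Matrix.transpose_one, Matrix.sub_mulVec,
            Matrix.one_mulVec, htdef, Matrix.mulVec_mulVec, ← Matrix.transpose_mul,
            ← Matrix.mul_assoc, hg, sub_self]
        have hval : t ⬝ᵥ (Ag *ᵥ c) = c ⬝ᵥ y := by
          calc t ⬝ᵥ (Ag *ᵥ c) = (Aᵀ *ᵥ y) ⬝ᵥ (Ag *ᵥ c) := rfl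
            _ = y ⬝ᵥ (A *ᵥ (Ag *ᵥ c)) := by
                rw [← Matrix.vecMul_transpose, ← Matrix.dotProduct_mulVec, Matrix.transpose_transpose]
            _ = y ⬝ᵥ ((A * Ag) *ᵥ c) := by rw [Matrix.mulVec_mulVec]
            _ = y ⬝ᵥ c := by rw [hAAg]
            _ = c ⬝ᵥ y := dotProduct_comm y c
        have := h t ht hker
        rw [hval] at this
        linarith
  refine ⟨main, main.trans ?_⟩
  constructor
  · intro h
    constructor
    · exact ⟨0, le_refl _, by simp, by simp⟩
    · rintro v ⟨t, ht, hker, rfl⟩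
      exact h t ht hker
  · rintro ⟨_, hlb⟩ t ht hker
    exact hlb ⟨t, ht, hker, rfl⟩
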